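/- For α > -1, b real, and n ≥ 1, the polynomial S_n(x) = L_n^α(x) + b·L_{n-1}^{α+1}(x) satisfies S_n(x) = L_n^{α+1}(x) + (b-1)·L_{n-1}^{α+1}(x) for all x; consequently, for b ≠ 1, the zeros of S_n interlace with the zeros of L_n^{α+1}. -/

import Mathlib

open Finset

/-- Generalized Laguerre polynomial `L_n^α(x) = ∑_{k=0}^n (-1)^k C(n+α, n-k) x^k / k!`,
where `C(n+α, n-k) = (∏_{i=1}^{n-k} (α+k+i)) / (n-k)!`. -/
noncomputable def laguerre (α : ℝ) (n : ℕ) (x : ℝ) : ℝ :=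
  ∑ k ∈ Finset.range (n + 1),
    (-1 : ℝ) ^ k * (∏ i ∈ Finset.range (n - k), (α + k + 1 + i)) /
      ((Nat.factorial (n - k) : ℝ) * (Nat.factorial k : ℝ)) * x ^ k

open Polynomial

noncomputable def lcoef (β : ℝ) (n k : ℕ) : ℝ :=
  (-1 : ℝ) ^ k * (∏ i ∈ Finset.range (n - k), (β + k + 1 + i)) /
      ((Nat.factorial (n - k) : ℝ) * (Nat.factorial k : ℝ))

noncomputable def lagP (β : ℝ) (n : ℕ) : Polynomial ℝ :=
  ∑ k ∈ Finset.range (n + 1), Polynomial.C (lcoef β n k) * Polynomial.X ^ k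

lemma laguerre_eq_eval (β : ℝ) (n : ℕ) (x : ℝ) : laguerre β n x = (lagP β n).eval x := by
  simp [laguerre, lagP, lcoef, eval_finset_sum]

lemma coeff_lagP (β : ℝ) (n k : ℕ) (h : k ≤ n) : (lagP β n).coeff k = lcoef β n k := by
  rw [lagP, finset_sum_coeff]
  rw [Finset.sum_eq_single k]
  · simp
  · intro j _ hj
    simp [coeff_C_mul, coeff_X_pow]; intro h; exact absurd h.symm hj
  · intro hk
    exact absurd (Finset.mem_range.2 (Nat.lt_succ_of_le h)) (fun c => hk c)

lemma coeff_lagP_gt (β : ℝ) (n k : ℕ) (h : n < k) : (lagP β n).coeff k = 0 := by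
  rw [lagP, finset_sum_coeff]
  apply Finset.sum_eq_zero
  intro j hj
  have : j ≠ k := by have := Finset.mem_range.1 hj; omega
  simp [coeff_C_mul, coeff_X_pow]; intro h; exact absurd h.symm this

lemma fact_pos' (d : ℕ) : (0:ℝ) < (Nat.factorial d : ℝ) := by
  exact_mod_cast Nat.factorial_pos d

lemma key_prod (c : ℝ) (d : ℕ) :
    (∏ i ∈ Finset.range (d+1), (c + 1 + i)) / (Nat.factorial (d+1) : ℝ)
      = (∏ i ∈ Finset.range (d+1), (c + 2 + i)) / (Nat.factorial (d+1) : ℝ)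
        - (∏ i ∈ Finset.range d, (c + 2 + i)) / (Nat.factorial d : ℝ) := by
  have h1 : (∏ i ∈ Finset.range (d+1), (c + 1 + i))
      = (c + 1) * ∏ i ∈ Finset.range d, (c + 2 + i) := by
    rw [Finset.prod_range_succ']
    simp only [Nat.cast_zero, add_zero, Nat.cast_add, Nat.cast_one]
    rw [mul_comm]
    congr 1
    apply Finset.prod_congr rfl
    intro i _; ring
  have h2 : (∏ i ∈ Finset.range (d+1), (c + 2 + i))
      = (∏ i ∈ Finset.range d, (c + 2 + i)) * (c + 2 + d) := Finset.prod_range_succ _ _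
  have hf : (Nat.factorial (d+1) : ℝ) = (d+1) * (Nat.factorial d : ℝ) := by
    rw [Nat.factorial_succ]; push_cast; ring
  rw [h1, h2, hf]
  have h3 := (fact_pos' d).ne'
  field_simp
  ring

lemma lcoef_split (α : ℝ) (m k : ℕ) (h : k ≤ m) :
    lcoef α (m+1) k = lcoef (α+1) (m+1) k - lcoef (α+1) m k := by
  obtain ⟨d, rfl⟩ : ∃ d, m = k + d := ⟨m - k, by omega⟩
  unfold lcoef
  rw [show k + d + 1 - k = d + 1 by omega, show k + d - k = d by omega]
  have e1 : (∏ i ∈ Finset.range (d+1), (α + k + 1 + i))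
      = ∏ i ∈ Finset.range (d+1), ((α + k) + 1 + i) := by
    apply Finset.prod_congr rfl; intro i _; ring
  have e2 : (∏ i ∈ Finset.range (d+1), (α + 1 + k + 1 + i))
      = ∏ i ∈ Finset.range (d+1), ((α + k) + 2 + i) := by
    apply Finset.prod_congr rfl; intro i _; ring
  have e3 : (∏ i ∈ Finset.range d, (α + 1 + k + 1 + i))
      = ∏ i ∈ Finset.range d, ((α + k) + 2 + i) := by
    apply Finset.prod_congr rfl; intro i _; ring
  rw [e1, e2, e3]
  have key := key_prod (α + k) d
  have hk := (fact_pos' k).ne'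
  have hd1 := (fact_pos' (d+1)).ne'
  have hd0 := (fact_pos' d).ne'
  linear_combination ((-1:ℝ)^k / (Nat.factorial k : ℝ)) * key

lemma lagA (α : ℝ) (m : ℕ) :
    lagP α (m+1) = lagP (α+1) (m+1) - lagP (α+1) m := by
  ext j
  rw [coeff_sub]
  rcases le_or_gt j m with hj | hj
  · rw [coeff_lagP _ _ _ (by omega), coeff_lagP _ _ _ (by omega), coeff_lagP _ _ _ hj]
    exact lcoef_split α m j hj
  · rcases eq_or_lt_of_le (show m + 1 ≤ j from hj) with he | hl
    · rw [← he, coeff_lagP _ _ _ (le_refl _), coeff_lagP _ _ _ (le_refl _),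
        coeff_lagP_gt _ _ _ (by omega)]
      simp [lcoef, show m + 1 - (m+1) = 0 by omega]
    · rw [coeff_lagP_gt _ _ _ (by omega), coeff_lagP_gt _ _ _ (by omega),
        coeff_lagP_gt _ _ _ (by omega)]
      ring

lemma prodLast (c : ℝ) (m : ℕ) :
    ∏ r ∈ Finset.range (m+1), (c + r) = (∏ r ∈ Finset.range m, (c + r)) * (c + m) :=
  Finset.prod_range_succ _ _

lemma prodShift (c : ℝ) (m : ℕ) :
    ∏ r ∈ Finset.range (m+1), (c + r) = c * ∏ r ∈ Finset.range m, ((c+1) + r) := by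
  rw [Finset.prod_range_succ']
  simp only [Nat.cast_zero, add_zero]
  rw [mul_comm]
  congr 1
  apply Finset.prod_congr rfl
  intro r _; push_cast; ring

lemma lcoef_rec_mid (β : ℝ) (i e : ℕ) :
    ((i:ℝ)+(e:ℝ)+3) * lcoef β (i+e+3) (i+1)
      = (2*(i:ℝ)+2*(e:ℝ)+5+β) * lcoef β (i+e+2) (i+1) - lcoef β (i+e+2) i
        - ((i:ℝ)+(e:ℝ)+2+β) * lcoef β (i+e+1) (i+1) := by
  unfold lcoef
  rw [show i+e+3-(i+1) = e+2 by omega, show i+e+2-(i+1) = e+1 by omega,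
      show i+e+2-i = e+2 by omega, show i+e+1-(i+1) = e by omega]
  have n1 : (∏ r ∈ Finset.range (e+2), (β + (↑(i+1):ℝ) + 1 + r))
      = ∏ r ∈ Finset.range (e+2), ((β+(i:ℝ)+2) + r) := by
    apply Finset.prod_congr rfl; intro r _; push_cast; ring
  have n2 : (∏ r ∈ Finset.range (e+1), (β + (↑(i+1):ℝ) + 1 + r))
      = ∏ r ∈ Finset.range (e+1), ((β+(i:ℝ)+2) + r) := by
    apply Finset.prod_congr rfl; intro r _; push_cast; ring_nf
  have n3 : (∏ r ∈ Finset.range (e+2), (β + (i:ℝ) + 1 + r))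
      = ∏ r ∈ Finset.range (e+2), ((β+(i:ℝ)+1) + r) := by
    apply Finset.prod_congr rfl; intro r _; push_cast; ring
  have n4 : (∏ r ∈ Finset.range e, (β + (↑(i+1):ℝ) + 1 + r))
      = ∏ r ∈ Finset.range e, ((β+(i:ℝ)+2) + r) := by
    apply Finset.prod_congr rfl; intro r _; push_cast; ring
  rw [n1, n2, n3, n4]
  set B := ∏ r ∈ Finset.range e, ((β+(i:ℝ)+2) + r) with hB
  have q1 : (∏ r ∈ Finset.range (e+2), ((β+(i:ℝ)+2) + r)) = B * (β+i+2+e) * (β+i+3+e) := by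
    rw [show e+2 = (e+1)+1 by rfl, prodLast, prodLast]; push_cast; ring
  have q2 : (∏ r ∈ Finset.range (e+1), ((β+(i:ℝ)+2) + r)) = B * (β+i+2+e) := by
    rw [prodLast]
  have q3 : (∏ r ∈ Finset.range (e+2), ((β+(i:ℝ)+1) + r)) = (β+i+1) * (B * (β+i+2+e)) := by
    rw [show e+2 = (e+1)+1 by rfl, prodShift]
    rw [show β+(i:ℝ)+1+1 = β+(i:ℝ)+2 by ring, q2]
  rw [q1, q2, q3]
  have f2 : ((Nat.factorial (e+2)):ℝ) = ((e:ℝ)+2)*((e:ℝ)+1)*(Nat.factorial e : ℝ) := by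
    rw [Nat.factorial_succ, Nat.factorial_succ]; push_cast; ring
  have f1 : ((Nat.factorial (e+1)):ℝ) = ((e:ℝ)+1)*(Nat.factorial e : ℝ) := by
    rw [Nat.factorial_succ]; push_cast; ring
  have fi : ((Nat.factorial (i+1)):ℝ) = ((i:ℝ)+1)*(Nat.factorial i : ℝ) := by
    rw [Nat.factorial_succ]; push_cast; ring
  rw [f2, f1, fi, pow_succ]
  have he := (fact_pos' e).ne'
  have hi := (fact_pos' i).ne'
  have he1 : ((e:ℝ)+1) ≠ 0 := by positivity
  have he2 : ((e:ℝ)+2) ≠ 0 := by positivity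
  have hi1 : ((i:ℝ)+1) ≠ 0 := by positivity
  field_simp
  ring

lemma lcoef_rec_zero (β : ℝ) (l : ℕ) :
    ((l:ℝ)+2) * lcoef β (l+2) 0
      = (2*(l:ℝ)+3+β) * lcoef β (l+1) 0 - ((l:ℝ)+1+β) * lcoef β l 0 := by
  unfold lcoef
  simp only [Nat.sub_zero, pow_zero, Nat.factorial_zero, Nat.cast_one, mul_one, one_mul,
    Nat.cast_zero, add_zero]
  set B := ∏ r ∈ Finset.range l, ((β+1) + r) with hB
  have q1 : (∏ r ∈ Finset.range (l+2), ((β+1) + r)) = B * (β+1+l) * (β+2+l) := by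
    rw [show l+2 = (l+1)+1 by rfl, prodLast, prodLast]; push_cast; ring
  have q2 : (∏ r ∈ Finset.range (l+1), ((β+1) + r)) = B * (β+1+l) := by
    rw [prodLast]
  rw [q1, q2]
  have f2 : ((Nat.factorial (l+2)):ℝ) = ((l:ℝ)+2)*((l:ℝ)+1)*(Nat.factorial l : ℝ) := by
    rw [Nat.factorial_succ, Nat.factorial_succ]; push_cast; ring
  have f1 : ((Nat.factorial (l+1)):ℝ) = ((l:ℝ)+1)*(Nat.factorial l : ℝ) := by
    rw [Nat.factorial_succ]; push_cast; ring
  rw [f2, f1]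
  have he := (fact_pos' l).ne'
  have he1 : ((l:ℝ)+1) ≠ 0 := by positivity
  have he2 : ((l:ℝ)+2) ≠ 0 := by positivity
  field_simp
  ring

lemma lcoef_rec_top1 (β : ℝ) (l : ℕ) :
    ((l:ℝ)+2) * lcoef β (l+2) (l+1)
      = (2*(l:ℝ)+3+β) * lcoef β (l+1) (l+1) - lcoef β (l+1) l := by
  unfold lcoef
  rw [show l+2-(l+1) = 1 by omega, show l+1-(l+1) = 0 by omega, show l+1-l = 1 by omega]
  simp only [Finset.prod_range_one, Finset.prod_range_zero, Nat.cast_zero, add_zero,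
    Nat.factorial_one, Nat.factorial_zero, Nat.cast_one, one_mul, mul_one]
  have fi : ((Nat.factorial (l+1)):ℝ) = ((l:ℝ)+1)*(Nat.factorial l : ℝ) := by
    rw [Nat.factorial_succ]; push_cast; ring
  rw [fi, pow_succ]
  have he := (fact_pos' l).ne'
  have he1 : ((l:ℝ)+1) ≠ 0 := by positivity
  field_simp
  push_cast
  ring

lemma lcoef_rec_top2 (β : ℝ) (l : ℕ) :
    ((l:ℝ)+2) * lcoef β (l+2) (l+2) = - lcoef β (l+1) (l+1) := by
  unfold lcoef
  rw [Nat.sub_self, Nat.sub_self]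
  simp only [Finset.prod_range_zero, Nat.factorial_zero, Nat.cast_one, one_mul]
  have f2 : ((Nat.factorial (l+2)):ℝ) = ((l:ℝ)+2)*(Nat.factorial (l+1) : ℝ) := by
    rw [Nat.factorial_succ]; push_cast; ring
  rw [f2, pow_succ, pow_succ]
  have he := (fact_pos' (l+1)).ne'
  have he2 : ((l:ℝ)+2) ≠ 0 := by positivity
  field_simp

lemma lagRec (β : ℝ) (l : ℕ) :
    Polynomial.C ((l:ℝ)+2) * lagP β (l+2)
      = (Polynomial.C (2*(l:ℝ)+3+β) - Polynomial.X) * lagP β (l+1)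
        - Polynomial.C ((l:ℝ)+1+β) * lagP β l := by
  ext j
  rw [coeff_sub, sub_mul, coeff_sub, coeff_C_mul, coeff_C_mul, coeff_C_mul]
  rcases j with _ | j
  · rw [mul_coeff_zero, coeff_X_zero, zero_mul, sub_zero]
    rw [coeff_lagP _ _ _ (by omega), coeff_lagP _ _ _ (by omega), coeff_lagP _ _ _ (by omega)]
    exact lcoef_rec_zero β l
  · rw [coeff_X_mul]
    rcases lt_trichotomy j l with hj | hj | hj
    · obtain ⟨e, rfl⟩ : ∃ e, l = j + 1 + e := ⟨l - j - 1, by omega⟩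
      rw [coeff_lagP _ _ _ (by omega), coeff_lagP _ _ _ (by omega),
        coeff_lagP _ _ _ (by omega), coeff_lagP _ _ _ (by omega)]
      have := lcoef_rec_mid β j e
      rw [show j+e+3 = j+1+e+2 by omega, show j+e+2 = j+1+e+1 by omega,
        show j+e+1 = j+1+e by omega] at this
      push_cast at this ⊢
      linarith [this]
    · subst hj
      rw [coeff_lagP _ _ _ (by omega), coeff_lagP _ _ _ (by omega),
        coeff_lagP _ _ _ (by omega), coeff_lagP_gt _ _ _ (by omega)]
      have := lcoef_rec_top1 β j
      push_cast at this ⊢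
      linarith [this]
    · rcases eq_or_lt_of_le (by omega : l + 1 ≤ j) with he | hl2
      · subst he
        rw [show l+1+1 = l+2 from rfl]
        rw [coeff_lagP _ _ _ (le_refl _), coeff_lagP _ _ _ (le_refl _),
          coeff_lagP_gt _ _ _ (by omega), coeff_lagP_gt _ _ _ (by omega)]
        have := lcoef_rec_top2 β l
        push_cast at this ⊢
        linarith [this]
      · rw [coeff_lagP_gt _ _ _ (by omega), coeff_lagP_gt _ _ _ (by omega),
          coeff_lagP_gt _ _ _ (by omega), coeff_lagP_gt _ _ _ (by omega)]
        ring

lemma lagP_zero (β : ℝ) : lagP β 0 = Polynomial.C 1 := by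
  unfold lagP lcoef
  simp

lemma lagP_one (β : ℝ) : lagP β 1 = Polynomial.C (β+1) - Polynomial.X := by
  unfold lagP lcoef
  rw [Finset.sum_range_succ, Finset.sum_range_one]
  norm_num [Nat.factorial]
  ring

lemma W_neg (β : ℝ) (hβ : 0 < β) (m : ℕ) (x : ℝ) :
    ((lagP β (m+1)).derivative.eval x) * ((lagP β m).eval x)
      - ((lagP β (m+1)).eval x) * ((lagP β m).derivative.eval x) < 0 := by
  induction m with
  | zero =>
    rw [lagP_zero, lagP_one]
    simp
  | succ m ih =>
    have h := lagRec β m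
    have hd := congrArg Polynomial.derivative h
    simp only [derivative_mul, derivative_sub, derivative_C, derivative_X, zero_mul, zero_sub,
      mul_one, zero_add, neg_mul, one_mul] at hd
    have e1 := congrArg (Polynomial.eval x) h
    have e2 := congrArg (Polynomial.eval x) hd
    simp only [eval_mul, eval_sub, eval_add, eval_neg, eval_C, eval_X] at e1 e2
    set p2' := (lagP β (m+2)).derivative.eval x
    set p2 := (lagP β (m+2)).eval x
    set p1' := (lagP β (m+1)).derivative.eval x
    set p1 := (lagP β (m+1)).eval x
    set p0' := (lagP β m).derivative.eval x
    set p0 := (lagP β m).eval x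
    have key : ((m:ℝ)+2) * (p2'*p1 - p2*p1') = -p1^2 + ((m:ℝ)+1+β) * (p1'*p0 - p1*p0') := by
      linear_combination p1 * e2 - p1' * e1
    have hm2 : (0:ℝ) < (m:ℝ)+2 := by positivity
    have hd0 : (0:ℝ) < (m:ℝ)+1+β := by positivity
    show p2'*p1 - p2*p1' < 0
    nlinarith [sq_nonneg p1, ih]

lemma poly_no_sign_change {p : Polynomial ℝ} {y y' : ℝ}
    (h : ∀ u ∈ Set.Ioo y y', p.eval u ≠ 0) :
    ∀ u ∈ Set.Ioo y y', ∀ v ∈ Set.Ioo y y', 0 < p.eval u * p.eval v := by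
  have key : ∀ a b : ℝ, a ∈ Set.Ioo y y' → b ∈ Set.Ioo y y' → a ≤ b →
      0 < p.eval a * p.eval b := by
    intro a b ha hb hab
    have ha0 := h a ha
    have hb0 := h b hb
    rcases eq_or_lt_of_le hab with rfl | hab
    · exact mul_self_pos.2 ha0
    · by_contra hcon
      push_neg at hcon
      have hne : p.eval a * p.eval b ≠ 0 := mul_ne_zero ha0 hb0
      have hlt : p.eval a * p.eval b < 0 := lt_of_le_of_ne hcon hne
      have hcont : ContinuousOn (fun x => p.eval x) (Set.Icc a b) :=
        (Polynomial.continuous p).continuousOn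
      have hsub : Set.Ioo a b ⊆ Set.Ioo y y' := by
        intro t ht
        exact ⟨lt_trans ha.1 ht.1, lt_trans ht.2 hb.2⟩
      rcases lt_or_gt_of_ne ha0 with hneg | hpos
      · have hbpos : 0 < p.eval b := by nlinarith
        have : (0:ℝ) ∈ Set.Ioo (p.eval a) (p.eval b) := ⟨hneg, hbpos⟩
        obtain ⟨z, hz, hz0⟩ := intermediate_value_Ioo (le_of_lt hab) hcont this
        exact h z (hsub hz) hz0
      · have hbneg : p.eval b < 0 := by nlinarith
        have : (0:ℝ) ∈ Set.Ioo (p.eval b) (p.eval a) := ⟨hbneg, hpos⟩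
        obtain ⟨z, hz, hz0⟩ := intermediate_value_Ioo' (le_of_lt hab) hcont this
        exact h z (hsub hz) hz0
  intro u hu v hv
  rcases le_total u v with huv | huv
  · exact key u v hu hv huv
  · rw [mul_comm]; exact key v u hv hu huv

lemma slope_sign {p : Polynomial ℝ} {y : ℝ}
    (hy : p.eval y = 0) (hD : p.derivative.eval y ≠ 0) :
    ∀ᶠ u in nhdsWithin y {y}ᶜ, 0 < p.derivative.eval y * ((p.eval u) / (u - y)) := by
  have hder : HasDerivAt (fun x => p.eval x) (p.derivative.eval y) y := p.hasDerivAt y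
  have htend := hasDerivAt_iff_tendsto_slope.1 hder
  have hopen : IsOpen {s : ℝ | 0 < p.derivative.eval y * s} :=
    isOpen_lt continuous_const (continuous_const.mul continuous_id)
  have hmem : {s : ℝ | 0 < p.derivative.eval y * s} ∈ nhds (p.derivative.eval y) :=
    hopen.mem_nhds (by rcases hD.lt_or_gt with h | h <;> simp <;> nlinarith)
  filter_upwards [htend hmem] with u hu
  simpa [slope_def_field, hy, div_eq_inv_mul, mul_comm] using hu

lemma deriv_sign_right {p : Polynomial ℝ} {y y' : ℝ} (hyy' : y < y')
    (hy : p.eval y = 0) (hD : p.derivative.eval y ≠ 0) :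
    ∃ u ∈ Set.Ioo y y', 0 < p.derivative.eval y * p.eval u := by
  have h1 := slope_sign hy hD
  have h2 : ∀ᶠ u in nhdsWithin y (Set.Ioi y),
      0 < p.derivative.eval y * ((p.eval u) / (u - y)) :=
    nhdsWithin_mono y (fun t ht => ne_of_gt ht) h1
  have h3 : Set.Ioo y y' ∈ nhdsWithin y (Set.Ioi y) := Ioo_mem_nhdsGT hyy'
  obtain ⟨u, hu1, hu2⟩ := (h2.and (Filter.eventually_of_mem h3 (fun t ht => ht))).exists
  refine ⟨u, hu2, ?_⟩
  have hupos : 0 < u - y := sub_pos.2 hu2.1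
  have := mul_pos hu1 hupos
  rw [mul_assoc, div_mul_cancel₀] at this
  · exact this
  · exact ne_of_gt hupos

lemma deriv_sign_left {p : Polynomial ℝ} {y y' : ℝ} (hyy' : y < y')
    (hy' : p.eval y' = 0) (hD : p.derivative.eval y' ≠ 0) :
    ∃ u ∈ Set.Ioo y y', p.derivative.eval y' * p.eval u < 0 := by
  have h1 := slope_sign hy' hD
  have h2 : ∀ᶠ u in nhdsWithin y' (Set.Iio y'),
      0 < p.derivative.eval y' * ((p.eval u) / (u - y')) :=
    nhdsWithin_mono y' (fun t ht => ne_of_lt ht) h1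
  have h3 : Set.Ioo y y' ∈ nhdsWithin y' (Set.Iio y') := Ioo_mem_nhdsLT hyy'
  obtain ⟨u, hu1, hu2⟩ := (h2.and (Filter.eventually_of_mem h3 (fun t ht => ht))).exists
  refine ⟨u, hu2, ?_⟩
  have huneg : u - y' < 0 := sub_neg.2 hu2.2
  have hmul := mul_neg_of_pos_of_neg hu1 huneg
  rw [mul_assoc, div_mul_cancel₀ _ (ne_of_lt huneg)] at hmul
  exact hmul

theorem S_t_one_identity_and_interlacing (α b : ℝ) (hα : α > -1) (n : ℕ) (hn : 1 ≤ n)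
    (S : ℝ → ℝ) (hS : ∀ x, S x = laguerre α n x + b * laguerre (α + 1) (n - 1) x) :
    (∀ x, S x = laguerre (α + 1) n x + (b - 1) * laguerre (α + 1) (n - 1) x) ∧
    (b ≠ 1 → ∀ y y' : ℝ, y < y' → laguerre (α + 1) n y = 0 →
      laguerre (α + 1) n y' = 0 → (∀ u ∈ Set.Ioo y y', laguerre (α + 1) n u ≠ 0) →
      S y * S y' < 0 ∧ ∃! z, z ∈ Set.Ioo y y' ∧ S z = 0) := by
  obtain ⟨m, rfl⟩ : ∃ m, n = m + 1 := ⟨n - 1, by omega⟩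
  simp only [Nat.add_sub_cancel] at hS ⊢
  set β := α + 1 with hβdef
  have hβ : 0 < β := by simp [hβdef]; linarith
  have part1 : ∀ x, S x = laguerre β (m+1) x + (b-1) * laguerre β m x := by
    intro x
    rw [hS x]
    have hA := congrArg (Polynomial.eval x) (lagA α m)
    rw [Polynomial.eval_sub] at hA
    rw [laguerre_eq_eval α (m+1) x, laguerre_eq_eval β (m+1) x, laguerre_eq_eval β m x, hA]
    ring
  refine ⟨part1, ?_⟩
  intro hb y y' hyy' hy hy' hno
  rw [laguerre_eq_eval] at hy hy'
  set P := lagP β (m+1) with hPdef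
  set Q := lagP β m with hQdef
  have hno' : ∀ u ∈ Set.Ioo y y', P.eval u ≠ 0 := by
    intro u hu
    have := hno u hu
    rwa [laguerre_eq_eval] at this
  have hW : ∀ x : ℝ, P.derivative.eval x * Q.eval x - P.eval x * Q.derivative.eval x < 0 :=
    fun x => W_neg β hβ m x
  have hWy : P.derivative.eval y * Q.eval y < 0 := by
    have := hW y; rw [hy] at this; linarith
  have hWy' : P.derivative.eval y' * Q.eval y' < 0 := by
    have := hW y'; rw [hy'] at this; linarith
  have hDy : P.derivative.eval y ≠ 0 := by
    intro h0; rw [h0, zero_mul] at hWy; exact lt_irrefl 0 hWy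
  have hDy' : P.derivative.eval y' ≠ 0 := by
    intro h0; rw [h0, zero_mul] at hWy'; exact lt_irrefl 0 hWy'
  obtain ⟨u0, hu0, hs0⟩ := deriv_sign_right hyy' hy hDy
  obtain ⟨u1, hu1, hs1⟩ := deriv_sign_left hyy' hy' hDy'
  have hsame := poly_no_sign_change hno' u0 hu0 u1 hu1
  have hDD : P.derivative.eval y * P.derivative.eval y' < 0 := by
    nlinarith [mul_pos hs0 (neg_pos.2 hs1), hsame]
  have hQQ : Q.eval y * Q.eval y' < 0 := by
    nlinarith [mul_pos (neg_pos.2 hWy) (neg_pos.2 hWy'), hDD]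
  have hSy : S y = (b-1) * Q.eval y := by
    rw [part1 y, laguerre_eq_eval, laguerre_eq_eval, hy]; ring
  have hSy' : S y' = (b-1) * Q.eval y' := by
    rw [part1 y', laguerre_eq_eval, laguerre_eq_eval, hy']; ring
  have hb1 : b - 1 ≠ 0 := sub_ne_zero.2 hb
  have hbsq : 0 < (b-1) * (b-1) := mul_self_pos.2 hb1
  have hSS : S y * S y' < 0 := by
    rw [hSy, hSy']
    nlinarith [mul_pos hbsq (neg_pos.2 hQQ)]
  refine ⟨hSS, ?_⟩
  set T := fun x => P.eval x + (b-1) * Q.eval x with hTdef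
  have hST : ∀ x, S x = T x := by
    intro x
    rw [part1 x, laguerre_eq_eval, laguerre_eq_eval]
  have hTcont : Continuous T := by
    exact (Polynomial.continuous P).add (continuous_const.mul (Polynomial.continuous Q))
  -- uniqueness machinery
  have hmono : StrictMonoOn (fun x => Q.eval x / P.eval x) (Set.Ioo y y') := by
    apply strictMonoOn_of_deriv_pos (convex_Ioo y y')
    · exact ContinuousOn.div (Polynomial.continuous Q).continuousOn
        (Polynomial.continuous P).continuousOn hno'
    · intro x hx
      rw [interior_Ioo] at hx
      have hp0 := hno' x hx
      have hd : HasDerivAt (fun x => Q.eval x / P.eval x)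
          ((Q.derivative.eval x * P.eval x - Q.eval x * P.derivative.eval x) / (P.eval x)^2) x :=
        (Q.hasDerivAt x).div (P.hasDerivAt x) hp0
      rw [hd.deriv]
      apply div_pos
      · have := hW x; nlinarith
      · positivity
  have huniq : ∀ z1 ∈ Set.Ioo y y', T z1 = 0 → ∀ z2 ∈ Set.Ioo y y', T z2 = 0 → z1 = z2 := by
    intro z1 hz1 ht1 z2 hz2 ht2
    have hp1 := hno' z1 hz1
    have hp2 := hno' z2 hz2
    have hT1 : P.eval z1 + (b-1) * Q.eval z1 = 0 := ht1
    have hT2 : P.eval z2 + (b-1) * Q.eval z2 = 0 := ht2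
    have e1 : Q.eval z1 / P.eval z1 = Q.eval z2 / P.eval z2 := by
      rw [div_eq_div_iff hp1 hp2]
      have h1 : (b-1) * (Q.eval z1 * P.eval z2) = (b-1) * (Q.eval z2 * P.eval z1) := by
        linear_combination (b-1) * ((Q.eval z1) * hT2 - (Q.eval z2) * hT1)
      exact mul_left_cancel₀ hb1 h1
    exact hmono.injOn hz1 hz2 e1
  -- existence
  have hTy : T y = S y := (hST y).symm
  have hTy' : T y' = S y' := (hST y').symm
  have hexists : ∃ z ∈ Set.Ioo y y', T z = 0 := by
    rcases mul_neg_iff.1 hSS with ⟨hp, hq⟩ | ⟨hp, hq⟩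
    · have h0 : (0:ℝ) ∈ Set.Ioo (T y') (T y) := by rw [hTy, hTy']; exact ⟨hq, hp⟩
      obtain ⟨z, hz, hz0⟩ := intermediate_value_Ioo' (le_of_lt hyy') hTcont.continuousOn h0
      exact ⟨z, hz, hz0⟩
    · have h0 : (0:ℝ) ∈ Set.Ioo (T y) (T y') := by rw [hTy, hTy']; exact ⟨hp, hq⟩
      obtain ⟨z, hz, hz0⟩ := intermediate_value_Ioo (le_of_lt hyy') hTcont.continuousOn h0
      exact ⟨z, hz, hz0⟩
  obtain ⟨z, hz, hz0⟩ := hexists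
  refine ⟨z, ⟨hz, by rw [hST z]; exact hz0⟩, ?_⟩
  rintro w ⟨hw, hw0⟩
  exact huniq w hw (by rw [← hST w]; exact hw0) z hz hz0
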